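/- The density of the face-centered cubic packing is π/√18: for the FCC lattice V = {√2·(a,b,c) : a,b,c ∈ ℤ, a+b+c even}, the ratio (volume of unit balls centered at points of V ∩ B(0,r)) / (volume of B(0,r)) tends to π/√18 as r → ∞. -/

import Mathlib

open Real Metric MeasureTheory Filter

/-- The face-centered cubic lattice. -/
def FCC : Set (EuclideanSpace ℝ (Fin 3)) :=
  {v | ∃ a b c : ℤ, Even (a + b + c) ∧
    v = fun i => Real.sqrt 2 * ![(a : ℝ), (b : ℝ), (c : ℝ)] i}

open Pointwise

noncomputable def emap : (Fin 3 → ℝ) ≃ₗ[ℝ] EuclideanSpace ℝ (Fin 3) where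
  toFun t := WithLp.toLp 2 ![Real.sqrt 2 * (t 0 + t 2), Real.sqrt 2 * (t 0 + t 1), Real.sqrt 2 * (t 1 + t 2)]
  invFun q := ![(q 0 + q 1 - q 2) / (2 * Real.sqrt 2), (-q 0 + q 1 + q 2) / (2 * Real.sqrt 2),
    (q 0 - q 1 + q 2) / (2 * Real.sqrt 2)]
  map_add' x y := by ext i; fin_cases i <;> simp [PiLp.add_apply] <;> ring
  map_smul' c x := by ext i; fin_cases i <;> simp [PiLp.smul_apply, smul_eq_mul] <;> ring
  left_inv t := by
    have h2 : Real.sqrt 2 ≠ 0 := by positivity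
    funext i; fin_cases i <;> · simp; field_simp; ring
  right_inv q := by
    have h2 : Real.sqrt 2 ≠ 0 := by positivity
    ext i; fin_cases i <;> · simp; field_simp; ring

lemma emap_apply (t : Fin 3 → ℝ) : emap t = WithLp.toLp 2 ![Real.sqrt 2 * (t 0 + t 2), Real.sqrt 2 * (t 0 + t 1), Real.sqrt 2 * (t 1 + t 2)] := rfl

noncomputable def fccBasis : Module.Basis (Fin 3) ℝ (EuclideanSpace ℝ (Fin 3)) :=
  (Pi.basisFun ℝ (Fin 3)).map emap

lemma fccBasis_apply (j : Fin 3) : fccBasis j = emap (Pi.single j 1) := by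
  rw [fccBasis, Module.Basis.map_apply, Pi.basisFun_apply]

lemma sum_zsmul_fccBasis (c : Fin 3 → ℤ) :
    ∑ i, c i • fccBasis i = emap (fun i => (c i : ℝ)) := by
  simp_rw [fccBasis_apply, ← map_zsmul]
  rw [← map_sum]
  congr 1
  funext j
  rw [Finset.sum_apply]
  fin_cases j <;> simp [Pi.single_apply, Fin.sum_univ_three]

lemma mem_span_iff (x : EuclideanSpace ℝ (Fin 3)) :
    x ∈ Submodule.span ℤ (Set.range ⇑fccBasis) ↔
      ∃ c : Fin 3 → ℤ, x = emap (fun i => (c i : ℝ)) := by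
  rw [Submodule.mem_span_range_iff_exists_fun]
  constructor
  · rintro ⟨c, rfl⟩; exact ⟨c, (sum_zsmul_fccBasis c)⟩
  · rintro ⟨c, rfl⟩; exact ⟨c, sum_zsmul_fccBasis c⟩

lemma FCC_eq : FCC = ↑(Submodule.span ℤ (Set.range ⇑fccBasis)) := by
  ext x
  rw [SetLike.mem_coe, mem_span_iff]
  constructor
  · rintro ⟨a, b, c, ⟨k, hk⟩, hx⟩
    refine ⟨![k - c, k - a, k - b], ?_⟩
    have hk' : (a : ℝ) + b + c = k + k := by exact_mod_cast hk
    ext i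
    fin_cases i <;> · simp [emap_apply, hx]; linarith
  · rintro ⟨c, rfl⟩
    refine ⟨c 0 + c 2, c 0 + c 1, c 1 + c 2, ⟨c 0 + c 1 + c 2, by ring⟩, ?_⟩
    funext i
    set_option maxRecDepth 4000 in
    fin_cases i <;> simp [emap_apply]

lemma fcc_dist {v w : EuclideanSpace ℝ (Fin 3)} (hv : v ∈ FCC) (hw : w ∈ FCC)
    (hne : v ≠ w) : 2 ≤ dist v w := by
  obtain ⟨a, b, c, hab, hva⟩ := hv
  obtain ⟨a', b', c', hab', hwa⟩ := hw
  have hd : ¬(a - a' = 0 ∧ b - b' = 0 ∧ c - c' = 0) := by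
    rintro ⟨h1, h2, h3⟩
    apply hne
    have : a = a' := by omega
    have : b = b' := by omega
    have : c = c' := by omega
    ext i; fin_cases i <;> simp_all
  have hev : Even ((a - a') + (b - b') + (c - c')) := by
    obtain ⟨k, hk⟩ := hab; obtain ⟨k', hk'⟩ := hab'
    exact ⟨k - k', by omega⟩
  have hsq : 2 ≤ (a - a') ^ 2 + (b - b') ^ 2 + (c - c') ^ 2 := by
    have h1 : 1 ≤ (a - a') ^ 2 + (b - b') ^ 2 + (c - c') ^ 2 := by
      have hne' : (a - a') ≠ 0 ∨ (b - b') ≠ 0 ∨ (c - c') ≠ 0 := by tauto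
      have e1 : (0:ℤ) ≤ (a - a') ^ 2 := sq_nonneg _
      have e2 : (0:ℤ) ≤ (b - b') ^ 2 := sq_nonneg _
      have e3 : (0:ℤ) ≤ (c - c') ^ 2 := sq_nonneg _
      rcases hne' with h | h | h <;>
        nlinarith [sq_abs (a - a'), sq_abs (b - b'), sq_abs (c - c'), Int.one_le_abs h,
          abs_nonneg (a - a'), abs_nonneg (b - b'), abs_nonneg (c - c')]
    have heven : Even ((a - a') ^ 2 + (b - b') ^ 2 + (c - c') ^ 2) := by
      have k1 : Even ((a - a') ^ 2 + (a - a')) := by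
        rw [show (a - a') ^ 2 + (a - a') = (a - a') * ((a - a') + 1) by ring]; exact Int.even_mul_succ_self (a - a')
      have k2 : Even ((b - b') ^ 2 + (b - b')) := by
        rw [show (b - b') ^ 2 + (b - b') = (b - b') * ((b - b') + 1) by ring]; exact Int.even_mul_succ_self (b - b')
      have k3 : Even ((c - c') ^ 2 + (c - c')) := by
        rw [show (c - c') ^ 2 + (c - c') = (c - c') * ((c - c') + 1) by ring]; exact Int.even_mul_succ_self (c - c')
      have hsum : Even (((a - a') ^ 2 + (b - b') ^ 2 + (c - c') ^ 2) + ((a - a') + (b - b') + (c - c'))) := by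
        rw [show ((a - a') ^ 2 + (b - b') ^ 2 + (c - c') ^ 2) + ((a - a') + (b - b') + (c - c'))
            = ((a - a') ^ 2 + (a - a')) + (((b - b') ^ 2 + (b - b')) + ((c - c') ^ 2 + (c - c'))) by ring]
        exact k1.add (k2.add k3)
      exact (Int.even_add.mp hsum).mpr hev
    obtain ⟨m, hm⟩ := heven
    omega
  have hsqR : (4:ℝ) ≤ 2 * ((a - a' : ℝ) ^ 2 + (b - b' : ℝ) ^ 2 + (c - c' : ℝ) ^ 2) := by
    have : (2:ℝ) ≤ ((a - a'):ℝ) ^ 2 + ((b - b'):ℝ) ^ 2 + ((c - c'):ℝ) ^ 2 := by exact_mod_cast hsq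
    push_cast at this ⊢
    linarith
  rw [EuclideanSpace.dist_eq, hva, hwa]
  have h2 : Real.sqrt 2 ^ 2 = 2 := Real.sq_sqrt (by norm_num)
  have hexp : ∑ i, dist ((fun i => Real.sqrt 2 * ![(a : ℝ), (b : ℝ), (c : ℝ)] i) i)
      ((fun i => Real.sqrt 2 * ![(a' : ℝ), (b' : ℝ), (c' : ℝ)] i) i) ^ 2
      = 2 * ((a - a' : ℝ) ^ 2 + (b - b' : ℝ) ^ 2 + (c - c' : ℝ) ^ 2) := by
    rw [Fin.sum_univ_three]
    simp only [Real.dist_eq, sq_abs]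
    simp
    nlinarith [h2]
  rw [hexp]
  calc (2:ℝ) = Real.sqrt 4 := by
        rw [show (4:ℝ) = 2 ^ 2 by norm_num, Real.sqrt_sq (by norm_num)]
    _ ≤ _ := Real.sqrt_le_sqrt hsqR

lemma fcc_countable : FCC.Countable := by
  have h : FCC ⊆ Set.range (fun p : ℤ × ℤ × ℤ =>
      (WithLp.toLp 2 (fun i => Real.sqrt 2 * ![(p.1 : ℝ), (p.2.1 : ℝ), (p.2.2 : ℝ)] i) :
        EuclideanSpace ℝ (Fin 3))) := by
    rintro x ⟨a, b, c, -, hx⟩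
    exact ⟨⟨a, b, c⟩, by ext i; simp [hx]⟩
  exact (Set.countable_range _).mono h

lemma norm_fccBasis (j : Fin 3) : ‖fccBasis j‖ = 2 := by
  rw [EuclideanSpace.norm_eq]
  have h2 : Real.sqrt 2 ^ 2 = 2 := Real.sq_sqrt (by norm_num)
  have : ∑ i, ‖fccBasis j i‖ ^ 2 = 4 := by
    fin_cases j <;>
      · rw [Fin.sum_univ_three]
        simp [fccBasis_apply, emap_apply, Real.norm_eq_abs, sq_abs, Pi.single_apply]
        nlinarith [h2]
  rw [this, show (4:ℝ) = 2 ^ 2 by norm_num, Real.sqrt_sq (by norm_num)]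

lemma norm_le_of_mem_fd {x : EuclideanSpace ℝ (Fin 3)}
    (hx : x ∈ ZSpan.fundamentalDomain fccBasis) : ‖x‖ ≤ 6 := by
  calc ‖x‖ = ‖ZSpan.fract fccBasis x‖ := by rw [ZSpan.fract_eq_self.mpr hx]
    _ ≤ ∑ i, ‖fccBasis i‖ := ZSpan.norm_fract_le fccBasis x
    _ = 6 := by rw [Fin.sum_univ_three, norm_fccBasis, norm_fccBasis, norm_fccBasis]; norm_num

lemma vol_fd : volume (ZSpan.fundamentalDomain fccBasis) = ENNReal.ofReal (4 * Real.sqrt 2) := by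
  classical
  set b₀ := (EuclideanSpace.basisFun (Fin 3) ℝ).toBasis with hb₀
  rw [ZSpan.measure_fundamentalDomain fccBasis volume b₀]
  have h1 : volume (ZSpan.fundamentalDomain b₀) = 1 := by
    have hfd : ZSpan.fundamentalDomain b₀ =
        (MeasurableEquiv.toLp 2 (Fin 3 → ℝ)).symm ⁻¹' (Set.univ.pi fun _ => Set.Ico (0:ℝ) 1) := by
      ext x
      simp only [ZSpan.mem_fundamentalDomain, Set.mem_preimage, Set.mem_pi, Set.mem_univ,
        forall_true_left, hb₀, OrthonormalBasis.coe_toBasis_repr_apply,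
        EuclideanSpace.basisFun_repr]
      rfl
    rw [hfd, (EuclideanSpace.volume_preserving_symm_measurableEquiv_toLp (Fin 3)).measure_preimage
      (MeasurableSet.univ_pi fun _ => measurableSet_Ico).nullMeasurableSet]
    rw [volume_pi_pi]
    simp [Real.volume_Ico]
  have h2 : b₀.det ⇑fccBasis = 4 * Real.sqrt 2 := by
    have entry : ∀ i j, b₀.toMatrix ⇑fccBasis i j = fccBasis j i := by
      intro i j
      rw [Module.Basis.toMatrix_apply, hb₀, OrthonormalBasis.coe_toBasis_repr_apply,
        EuclideanSpace.basisFun_repr]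
    rw [Module.Basis.det_apply, Matrix.det_fin_three]
    simp only [entry]
    have h2 : Real.sqrt 2 ^ 2 = 2 := Real.sq_sqrt (by norm_num)
    simp [fccBasis_apply, emap_apply, Pi.single_apply]
    nlinarith [h2]
  rw [h1, h2, mul_one, abs_of_nonneg (by positivity)]

lemma gammaC : Real.sqrt π ^ 3 / Real.Gamma ((5:ℝ) / 2) = 4 * π / 3 := by
  have h : Real.sqrt π ^ 2 = π := Real.sq_sqrt Real.pi_pos.le
  have h0 : Real.sqrt π ≠ 0 := by positivity
  have hg : Real.Gamma ((5:ℝ) / 2) = 3 / 4 * Real.sqrt π := by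
    rw [show ((5:ℝ) / 2) = 3/2 + 1 by norm_num, Real.Gamma_add_one (by norm_num),
      show (3:ℝ)/2 = 1/2 + 1 by norm_num, Real.Gamma_add_one (by norm_num),
      Real.Gamma_one_half_eq]
    ring
  have h3 : Real.sqrt π ^ 3 = π * Real.sqrt π := by
    calc Real.sqrt π ^ 3 = Real.sqrt π ^ 2 * Real.sqrt π := by ring
      _ = π * Real.sqrt π := by rw [h]
  rw [hg, h3]
  field_simp

lemma vol_cB (r : ℝ) : volume (closedBall (0 : EuclideanSpace ℝ (Fin 3)) r)
    = ENNReal.ofReal r ^ 3 * ENNReal.ofReal (4 * π / 3) := by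
  rw [EuclideanSpace.volume_closedBall]
  norm_num [gammaC]

lemma vol_ball_one (v : EuclideanSpace ℝ (Fin 3)) :
    volume (ball v 1) = ENNReal.ofReal (4 * π / 3) := by
  rw [EuclideanSpace.volume_ball]
  norm_num [gammaC]

lemma K_mul : (π / Real.sqrt 18) * (4 * Real.sqrt 2) = 4 * π / 3 := by
  have h18 : Real.sqrt 18 = 3 * Real.sqrt 2 := by
    rw [show (18:ℝ) = 3 ^ 2 * 2 by norm_num, Real.sqrt_mul (by positivity),
      Real.sqrt_sq (by norm_num)]
  have h2 : Real.sqrt 2 ≠ 0 := by positivity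
  rw [h18]
  field_simp

lemma fd_translates_disjoint {v w : EuclideanSpace ℝ (Fin 3)} (hv : v ∈ FCC) (hw : w ∈ FCC)
    (hne : v ≠ w) :
    Disjoint (v +ᵥ ZSpan.fundamentalDomain fccBasis)
      (w +ᵥ ZSpan.fundamentalDomain fccBasis) := by
  rw [FCC_eq, SetLike.mem_coe] at hv hw
  refine Set.disjoint_left.mpr fun x hxv hxw => hne ?_
  rw [Set.mem_vadd_set_iff_neg_vadd_mem] at hxv hxw
  obtain ⟨u, -, huniq⟩ := ZSpan.exist_unique_vadd_mem_fundamentalDomain fccBasis x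
  have h1 := huniq ⟨-v, neg_mem hv⟩ hxv
  have h2 := huniq ⟨-w, neg_mem hw⟩ hxw
  have h3 : (-v : EuclideanSpace ℝ (Fin 3)) = -w := by
    have := h1.trans h2.symm
    exact congrArg Subtype.val this
  exact neg_injective h3

lemma T_subset (r : ℝ) :
    (⋃ v ∈ FCC ∩ closedBall (0 : EuclideanSpace ℝ (Fin 3)) r,
       v +ᵥ ZSpan.fundamentalDomain fccBasis) ⊆
      closedBall (0 : EuclideanSpace ℝ (Fin 3)) (r + 6) := by
  intro x hx
  simp only [Set.mem_iUnion, exists_prop] at hx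
  obtain ⟨v, ⟨hvF, hvr⟩, hxv⟩ := hx
  rw [Set.mem_vadd_set_iff_neg_vadd_mem] at hxv
  rw [mem_closedBall_zero_iff]
  have h1 : ‖v‖ ≤ r := mem_closedBall_zero_iff.mp hvr
  have h2 : ‖-v + x‖ ≤ 6 := norm_le_of_mem_fd hxv
  calc ‖x‖ = ‖v + (-v + x)‖ := by rw [add_neg_cancel_left]
    _ ≤ ‖v‖ + ‖-v + x‖ := norm_add_le _ _
    _ ≤ r + 6 := add_le_add h1 h2

lemma subset_T {r : ℝ} :
    closedBall (0 : EuclideanSpace ℝ (Fin 3)) (r - 6) ⊆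
      ⋃ v ∈ FCC ∩ closedBall (0 : EuclideanSpace ℝ (Fin 3)) r,
        v +ᵥ ZSpan.fundamentalDomain fccBasis := by
  intro x hx
  obtain ⟨u, hu, -⟩ := ZSpan.exist_unique_vadd_mem_fundamentalDomain fccBasis x
  have hxnorm : ‖x‖ ≤ r - 6 := mem_closedBall_zero_iff.mp hx
  have huD : ((u : EuclideanSpace ℝ (Fin 3)) + x) ∈ ZSpan.fundamentalDomain fccBasis := hu
  have h6 : ‖(u : EuclideanSpace ℝ (Fin 3)) + x‖ ≤ 6 := norm_le_of_mem_fd huD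
  have hnorm_u : ‖-(u : EuclideanSpace ℝ (Fin 3))‖ ≤ r := by
    have heq : -(u : EuclideanSpace ℝ (Fin 3)) = x - ((u : EuclideanSpace ℝ (Fin 3)) + x) := by
      abel
    rw [heq]
    calc ‖x - ((u : EuclideanSpace ℝ (Fin 3)) + x)‖
        ≤ ‖x‖ + ‖(u : EuclideanSpace ℝ (Fin 3)) + x‖ := norm_sub_le _ _
      _ ≤ (r - 6) + 6 := add_le_add hxnorm h6
      _ = r := by ring
  simp only [Set.mem_iUnion, exists_prop]
  refine ⟨-(u : EuclideanSpace ℝ (Fin 3)), ⟨?_, mem_closedBall_zero_iff.mpr hnorm_u⟩, ?_⟩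
  · rw [FCC_eq, SetLike.mem_coe]; exact neg_mem u.2
  · rw [Set.mem_vadd_set_iff_neg_vadd_mem, neg_neg]
    exact huD

lemma vol_U_eq (r : ℝ) :
    volume (⋃ v ∈ FCC ∩ closedBall (0 : EuclideanSpace ℝ (Fin 3)) r, ball v 1)
      = ENNReal.ofReal (π / Real.sqrt 18) *
        volume (⋃ v ∈ FCC ∩ closedBall (0 : EuclideanSpace ℝ (Fin 3)) r,
          v +ᵥ ZSpan.fundamentalDomain fccBasis) := by
  have hcnt : (FCC ∩ closedBall (0 : EuclideanSpace ℝ (Fin 3)) r).Countable :=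
    fcc_countable.mono Set.inter_subset_left
  have hdisjB : (FCC ∩ closedBall (0 : EuclideanSpace ℝ (Fin 3)) r).PairwiseDisjoint
      (fun v => ball v 1) := by
    intro v hv w hw hvw
    exact ball_disjoint_ball (by linarith [fcc_dist hv.1 hw.1 hvw])
  have hdisjD : (FCC ∩ closedBall (0 : EuclideanSpace ℝ (Fin 3)) r).PairwiseDisjoint
      (fun v => v +ᵥ ZSpan.fundamentalDomain fccBasis) :=
    fun v hv w hw hvw => fd_translates_disjoint hv.1 hw.1 hvw
  rw [measure_biUnion hcnt hdisjB (fun v _ => measurableSet_ball),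
    measure_biUnion hcnt hdisjD
      (fun v _ => (ZSpan.fundamentalDomain_measurableSet fccBasis).const_vadd v)]
  calc ∑' (v : ↥(FCC ∩ closedBall (0 : EuclideanSpace ℝ (Fin 3)) r)),
        volume (ball (v : EuclideanSpace ℝ (Fin 3)) 1)
      = ∑' (v : ↥(FCC ∩ closedBall (0 : EuclideanSpace ℝ (Fin 3)) r)),
          ENNReal.ofReal (π / Real.sqrt 18) *
            volume ((v : EuclideanSpace ℝ (Fin 3)) +ᵥ ZSpan.fundamentalDomain fccBasis) := by
        refine tsum_congr fun v => ?_
        rw [vol_ball_one, measure_vadd, vol_fd, ← ENNReal.ofReal_mul (by positivity), K_mul]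
    _ = _ := ENNReal.tsum_mul_left

theorem fcc_density :
    Tendsto
      (fun r : ℝ =>
        volume (⋃ v ∈ FCC ∩ closedBall 0 r, ball v 1) / volume (closedBall (0 : EuclideanSpace ℝ (Fin 3)) r))
      atTop (nhds (ENNReal.ofReal (π / Real.sqrt 18))) := by
  have hK0 : (0:ℝ) ≤ π / Real.sqrt 18 := by positivity
  have hbound : ∀ a : ℝ, Tendsto
      (fun r : ℝ => ENNReal.ofReal ((π / Real.sqrt 18) * ((r + a) / r) ^ 3)) atTop
      (nhds (ENNReal.ofReal (π / Real.sqrt 18))) := by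
    intro a
    refine ENNReal.tendsto_ofReal ?_
    have h1 : Tendsto (fun r : ℝ => (r + a) / r) atTop (nhds 1) := by
      have h2 : Tendsto (fun r : ℝ => 1 + a / r) atTop (nhds (1 + 0)) :=
        tendsto_const_nhds.add (tendsto_const_nhds.div_atTop tendsto_id)
      rw [add_zero] at h2
      refine h2.congr' ?_
      filter_upwards [eventually_gt_atTop 0] with r hr
      field_simp
    have h3 := (h1.pow 3).const_mul (π / Real.sqrt 18)
    simpa using h3
  refine tendsto_of_tendsto_of_tendsto_of_le_of_le' (hbound (-6)) (hbound 6) ?_ ?_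
  · -- lower bound
    filter_upwards [eventually_ge_atTop 7] with r hr
    have hr0 : (0:ℝ) < r := by linarith
    have hden : volume (closedBall (0 : EuclideanSpace ℝ (Fin 3)) r)
        = ENNReal.ofReal (r ^ 3 * (4 * π / 3)) := by
      rw [vol_cB, ← ENNReal.ofReal_pow hr0.le, ← ENNReal.ofReal_mul (by positivity)]
    have hlow : ENNReal.ofReal ((π / Real.sqrt 18) * ((r - 6) ^ 3 * (4 * π / 3)))
        ≤ volume (⋃ v ∈ FCC ∩ closedBall (0 : EuclideanSpace ℝ (Fin 3)) r, ball v 1) := by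
      rw [vol_U_eq r, ENNReal.ofReal_mul hK0]
      refine mul_le_mul_right ?_ _
      calc ENNReal.ofReal ((r - 6) ^ 3 * (4 * π / 3))
          = volume (closedBall (0 : EuclideanSpace ℝ (Fin 3)) (r - 6)) := by
            rw [vol_cB, ← ENNReal.ofReal_pow (by linarith), ← ENNReal.ofReal_mul
              (pow_nonneg (by linarith) 3)]
        _ ≤ _ := measure_mono subset_T
    rw [hden]
    rw [ENNReal.le_div_iff_mul_le (Or.inl (ENNReal.ofReal_pos.mpr (by positivity)).ne')
      (Or.inl ENNReal.ofReal_ne_top)]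
    refine le_trans (le_of_eq ?_) hlow
    rw [← ENNReal.ofReal_mul (mul_nonneg hK0 (pow_nonneg (div_nonneg (by linarith) hr0.le) 3))]
    congr 1
    field_simp
    ring
  · -- upper bound
    filter_upwards [eventually_ge_atTop 7] with r hr
    have hr0 : (0:ℝ) < r := by linarith
    have hden : volume (closedBall (0 : EuclideanSpace ℝ (Fin 3)) r)
        = ENNReal.ofReal (r ^ 3 * (4 * π / 3)) := by
      rw [vol_cB, ← ENNReal.ofReal_pow hr0.le, ← ENNReal.ofReal_mul (by positivity)]
    have hup : volume (⋃ v ∈ FCC ∩ closedBall (0 : EuclideanSpace ℝ (Fin 3)) r, ball v 1)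
        ≤ ENNReal.ofReal ((π / Real.sqrt 18) * ((r + 6) ^ 3 * (4 * π / 3))) := by
      rw [vol_U_eq r, ENNReal.ofReal_mul hK0]
      refine mul_le_mul_right ?_ _
      calc volume (⋃ v ∈ FCC ∩ closedBall (0 : EuclideanSpace ℝ (Fin 3)) r,
              v +ᵥ ZSpan.fundamentalDomain fccBasis)
          ≤ volume (closedBall (0 : EuclideanSpace ℝ (Fin 3)) (r + 6)) := measure_mono (T_subset r)
        _ = ENNReal.ofReal ((r + 6) ^ 3 * (4 * π / 3)) := by
            rw [vol_cB, ← ENNReal.ofReal_pow (by linarith), ← ENNReal.ofReal_mul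
              (pow_nonneg (by linarith) 3)]
    rw [hden]
    rw [ENNReal.div_le_iff_le_mul (Or.inl (ENNReal.ofReal_pos.mpr (by positivity)).ne')
      (Or.inl ENNReal.ofReal_ne_top)]
    refine le_trans hup (le_of_eq ?_)
    rw [← ENNReal.ofReal_mul (mul_nonneg hK0 (pow_nonneg (div_nonneg (by linarith) hr0.le) 3))]
    congr 1
    field_simp
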